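/- Let Q be a commutative unital quantale and Σ a class of ideals with the quantale topology. Then Σ is a T₁-space if and only if every member of Σ is a maximal ideal of Q, provided Σ contains, for each of its members I, some maximal ideal above I. More precisely (as stated in the paper): Σ is T₁ if and only if for every I ∈ Σ and every maximal ideal M ⊇ I one has M = I; in particular, if Max(Q) ⊆ Σ, then Σ is T₁ iff Σ ⊆ Max(Q) (iff Σ consists of maximal ideals). -/

import Mathlib

namespace QuantalePaper

/-- An ideal of a complete lattice: nonempty, downward closed, closed under binary joins. -/
structure QIdeal (Q : Type*) [CompleteLattice Q] where
  carrier : Set Q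
  nonempty' : carrier.Nonempty
  sup_mem' : ∀ ⦃x⦄, x ∈ carrier → ∀ ⦃y⦄, y ∈ carrier → x ⊔ y ∈ carrier
  lower' : ∀ ⦃x⦄, x ∈ carrier → ∀ ⦃l : Q⦄, l ≤ x → l ∈ carrier

namespace QIdeal

variable {Q : Type*} [CompleteLattice Q]

instance : SetLike (QIdeal Q) Q where
  coe := carrier
  coe_injective := by rintro ⟨a,_,_,_⟩ ⟨b,_,_,_⟩ h; simpa using h

instance : PartialOrder (QIdeal Q) := .ofSetLike (QIdeal Q) Q

/-- A proper ideal. -/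
def IsProper (I : QIdeal Q) : Prop := (⊤ : Q) ∉ I

/-- A maximal ideal: a proper ideal maximal among proper ideals. -/
def IsMaximal (I : QIdeal Q) : Prop :=
  I.IsProper ∧ ∀ J : QIdeal Q, J.IsProper → I ≤ J → J = I

/-- A prime ideal. -/
def IsPrime [Mul Q] (I : QIdeal Q) : Prop :=
  I.IsProper ∧ ∀ x y : Q, x * y ∈ I → x ∈ I ∨ y ∈ I

end QIdeal

variable {Q : Type*} [CompleteLattice Q]

/-- The subbasic closed set `I↑ ∩ Σ` inside the subtype of a class `S` of ideals. -/
def up (S : Set (QIdeal Q)) (I : QIdeal Q) : Set ↥S := {J : ↥S | (I : Set Q) ⊆ (J : QIdeal Q)}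

/-- The quantale topology on a class `S` of ideals, generated by the sets `up S I`
as a subbasis of closed sets. -/
def qTop (S : Set (QIdeal Q)) : TopologicalSpace ↥S :=
  .generateFrom {U | ∃ I : QIdeal Q, U = (up S I)ᶜ}

/-- `X↑` for a set `X` of ideals: members of `S` containing the intersection `⋀X`,
with `∅↑ = ∅`. -/
def upSet (S : Set (QIdeal Q)) (X : Set (QIdeal Q)) : Set ↥S :=
  {J : ↥S | X.Nonempty ∧ ∀ x : Q, (∀ I ∈ X, x ∈ I) → x ∈ (J : QIdeal Q)}

lemma spec_open {S : Set (QIdeal Q)} {I J : ↥S} (hIJ : ((I : QIdeal Q) : Set Q) ⊆ (J : QIdeal Q))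
    {U : Set ↥S}
    (hU : TopologicalSpace.GenerateOpen {U | ∃ K : QIdeal Q, U = (up S K)ᶜ} U)
    (hJ : J ∈ U) : I ∈ U := by
  induction hU with
  | basic U hU =>
    obtain ⟨K, rfl⟩ := hU
    intro hKI
    exact hJ (fun x hx => hIJ (hKI hx))
  | univ => trivial
  | inter U V _ _ ihU ihV => exact ⟨ihU hJ.1, ihV hJ.2⟩
  | sUnion _ _ ih =>
    obtain ⟨t, ht, hJt⟩ := hJ
    exact ⟨t, ht, ih t ht hJt⟩

theorem stmt10 [CommMonoid Q] [IsQuantale Q] (htop : (1 : Q) = ⊤) (S : Set (QIdeal Q))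
    (hmax : ∀ I ∈ S, ∃ M ∈ S, QIdeal.IsMaximal M ∧ I ≤ M) :
    @T1Space ↥S (qTop S) ↔ ∀ I ∈ S, QIdeal.IsMaximal I := by
  letI := qTop S
  constructor
  · intro h1 I hI
    obtain ⟨M, hMS, hMmax, hIM⟩ := hmax I hI
    have hclosed : IsClosed ({(⟨I, hI⟩ : ↥S)} : Set ↥S) := isClosed_singleton
    have hopen : TopologicalSpace.GenerateOpen {U | ∃ K : QIdeal Q, U = (up S K)ᶜ}
        ({(⟨I, hI⟩ : ↥S)} : Set ↥S)ᶜ := hclosed.isOpen_compl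
    by_cases hMI : M = I
    · exact hMI ▸ hMmax
    · have hM' : (⟨M, hMS⟩ : ↥S) ∈ ({(⟨I, hI⟩ : ↥S)} : Set ↥S)ᶜ := by
        simp [Subtype.ext_iff, hMI]
      have := spec_open (I := (⟨I, hI⟩ : ↥S)) (J := (⟨M, hMS⟩ : ↥S)) hIM hopen hM'
      simp at this
  · intro hall
    refine ⟨fun x => ?_⟩
    have hx : ({x} : Set ↥S) = up S (x : QIdeal Q) := by
      ext J
      constructor
      · rintro rfl; exact fun a ha => ha
      · intro hJ
        have hJmax := hall J J.2
        have hxmax := hall x x.2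
        have : (J : QIdeal Q) = (x : QIdeal Q) := hxmax.2 _ hJmax.1 hJ
        exact Subtype.ext this
    rw [hx]
    exact ⟨TopologicalSpace.GenerateOpen.basic _ ⟨(x : QIdeal Q), rfl⟩⟩

end QuantalePaper
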